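/- Let S' be a sequence of α-fat objects in (0,N)^d processed by the level-picking algorithm, such that each object in S' is not hit at its arrival time. Then |S'| ≤ OPT · ⌊log₂ N⌋ · (4α+1)^d, where OPT is the minimum size of a hitting set of S', and the algorithm uses at most (4α+1)^(2d) · ⌊log₂ N⌋ · OPT points in total. -/

import Mathlib

set_option maxHeartbeats 1000000

noncomputable section

/-- Closed axis-parallel `d`-cube with lower corner `a` and side length `w`. -/
def Cube {d : ℕ} (a : Fin d → ℝ) (w : ℝ) : Set (Fin d → ℝ) :=
  {x | ∀ i, a i ≤ x i ∧ x i ≤ a i + w}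

/-- Open axis-parallel `d`-cube with lower corner `a` and side length `w`. -/
def OpenCube {d : ℕ} (a : Fin d → ℝ) (w : ℝ) : Set (Fin d → ℝ) :=
  {x | ∀ i, a i < x i ∧ x i < a i + w}

/-- The open box `(0,N)^d`. -/
def Box (d N : ℕ) : Set (Fin d → ℝ) :=
  {x | ∀ i, 0 < x i ∧ x i < N}

/-- The level of an integer point: minimum 2-adic valuation of its coordinates. -/
def level {d : ℕ} (q : Fin d → ℤ) : ℕ := ⨅ i, padicValInt 2 (q i)

/-- Embedding of integer points into `ℝ^d`. -/
def toRealPt {d : ℕ} (q : Fin d → ℤ) : Fin d → ℝ := fun i => (q i : ℝ)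

/-- `w` is the out-width of `O`: side of the smallest enclosing axis-parallel cube. -/
def IsOutWidth {d : ℕ} (O : Set (Fin d → ℝ)) (w : ℝ) : Prop :=
  (∃ a, O ⊆ Cube a w) ∧ ∀ w' a, O ⊆ Cube a w' → w ≤ w'

/-- `w` is the in-width of `O`: side of the largest inscribed axis-parallel cube. -/
def IsInWidth {d : ℕ} (O : Set (Fin d → ℝ)) (w : ℝ) : Prop :=
  (∃ a, Cube a w ⊆ O) ∧ ∀ w' a, Cube a w' ⊆ O → w' ≤ w

/-- `O` is `α`-fat: out-width at most `α` times in-width. -/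
def IsFat {d : ℕ} (α : ℝ) (O : Set (Fin d → ℝ)) : Prop :=
  ∃ wo wi, IsOutWidth O wo ∧ IsInWidth O wi ∧ wo ≤ α * wi

/-- Level of an object: maximum level of integer points inside it. -/
def objLevel {d : ℕ} (O : Set (Fin d → ℝ)) : ℕ :=
  sSup {l | ∃ q : Fin d → ℤ, toRealPt q ∈ O ∧ level q = l}

/-- Integer points of level exactly `l` inside `O`. -/
def lvlPts {d : ℕ} (l : ℕ) (O : Set (Fin d → ℝ)) : Set (Fin d → ℤ) :=
  {q | toRealPt q ∈ O ∧ level q = l}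

/-- `H` hits `O`. -/
def hits {d : ℕ} (H : Set (Fin d → ℤ)) (O : Set (Fin d → ℝ)) : Prop :=
  ∃ q ∈ H, toRealPt q ∈ O

/-- The hitting set maintained by the level-picking algorithm after `n` rounds. -/
def algoH {d : ℕ} (O : ℕ → Set (Fin d → ℝ)) : ℕ → Set (Fin d → ℤ)
  | 0 => ∅
  | n + 1 =>
      algoH O n ∪
        {q | ¬ hits (algoH O n) (O n) ∧ q ∈ lvlPts (objLevel (O n)) (O n)}

namespace Aux


variable {d : ℕ}

lemma level_le_val (q : Fin d → ℤ) (i : Fin d) : level q ≤ padicValInt 2 (q i) :=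
  ciInf_le (OrderBot.bddBelow _) i

lemma pow_level_dvd (q : Fin d → ℤ) (i : Fin d) : (2:ℤ) ^ level q ∣ q i := by
  have h1 : (2:ℤ) ^ padicValInt 2 (q i) ∣ q i := by
    have := padicValInt_dvd (p := 2) (q i)
    simpa using this
  exact dvd_trans (pow_dvd_pow 2 (level_le_val q i)) h1

lemma le_level [Nonempty (Fin d)] {q : Fin d → ℤ} {k : ℕ}
    (h0 : ∀ i, q i ≠ 0) (h : ∀ i, (2:ℤ) ^ k ∣ q i) : k ≤ level q := by
  refine le_ciInf fun i => ?_
  have h2 := (padicValInt_dvd_iff (p := 2) k (q i)).mp (by simpa using h i)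
  rcases h2 with h' | h'
  · exact absurd h' (h0 i)
  · exact h'

lemma pow_level_le {q : Fin d → ℤ} (i : Fin d) (hq : 0 < q i) :
    (2:ℤ) ^ level q ≤ q i := Int.le_of_dvd hq (pow_level_dvd q i)

lemma level_le_log {N : ℕ} (hN : 2 ≤ N) [Nonempty (Fin d)] {q : Fin d → ℤ}
    (hq : ∀ i, 0 < q i ∧ q i < (N:ℤ)) : level q ≤ Nat.log 2 N := by
  obtain ⟨i⟩ := (inferInstance : Nonempty (Fin d))
  have h1 : (2:ℤ) ^ level q ≤ q i := pow_level_le i (hq i).1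
  have h2 : (2:ℤ) ^ level q < (N:ℤ) := lt_of_le_of_lt h1 (hq i).2
  have h3 : 2 ^ level q ≤ N := by exact_mod_cast le_of_lt h2
  exact (Nat.le_log_iff_pow_le (by norm_num) (by omega)).mpr h3

lemma grid_point (a : Fin d → ℝ) {w : ℝ} (k : ℕ) (hw : (2:ℝ) ^ k ≤ w) :
    ∃ q : Fin d → ℤ, toRealPt q ∈ Cube a w ∧ ∀ i, (2:ℤ) ^ k ∣ q i := by
  refine ⟨fun i => 2 ^ k * ⌈a i / 2 ^ k⌉, ?_, fun i => Dvd.intro _ rfl⟩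
  simp only [Cube, Set.mem_setOf_eq, toRealPt]
  intro i
  have hpos : (0:ℝ) < 2 ^ k := by positivity
  have h1 : a i / 2 ^ k ≤ (⌈a i / 2 ^ k⌉ : ℝ) := Int.le_ceil _
  have h2 : (⌈a i / 2 ^ k⌉ : ℝ) < a i / 2 ^ k + 1 := Int.ceil_lt_add_one _
  have h3 : (a i / 2 ^ k) * 2 ^ k = a i := div_mul_cancel₀ _ (ne_of_gt hpos)
  have h4 : a i ≤ (⌈a i / 2 ^ k⌉ : ℝ) * 2 ^ k := (div_le_iff₀ hpos).mp h1
  constructor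
  · push_cast; nlinarith
  · push_cast; nlinarith

lemma count_core (l : ℕ) (lo hi : Fin d → ℤ) (Q : Set (Fin d → ℤ))
    (hQ : ∀ q ∈ Q, ∀ i, ∃ m : ℤ, q i = 2 ^ l * m ∧ lo i ≤ m ∧ m ≤ hi i) :
    Q.Finite ∧ Q.ncard ≤ (Finset.Icc lo hi).card := by
  classical
  set ψ : (Fin d → ℤ) → (Fin d → ℤ) := fun m i => 2 ^ l * m i with hψ
  have hinj : Function.Injective ψ := by
    intro x y h
    funext i
    have h' : (2:ℤ) ^ l * x i = 2 ^ l * y i := congrFun h i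
    exact mul_left_cancel₀ (by positivity) h'
  have hsub : Q ⊆ ψ '' ↑(Finset.Icc lo hi) := by
    intro q hq
    refine ⟨fun i => (hQ q hq i).choose, ?_, ?_⟩
    · simp only [Finset.coe_Icc, Set.mem_Icc]
      exact ⟨fun i => (hQ q hq i).choose_spec.2.1, fun i => (hQ q hq i).choose_spec.2.2⟩
    · funext i; exact ((hQ q hq i).choose_spec.1).symm
  have hfin : Q.Finite := ((Finset.Icc lo hi).finite_toSet.image ψ).subset hsub
  refine ⟨hfin, ?_⟩
  calc Q.ncard ≤ (ψ '' ↑(Finset.Icc lo hi)).ncard :=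
        Set.ncard_le_ncard hsub ((Finset.Icc lo hi).finite_toSet.image ψ)
    _ = (↑(Finset.Icc lo hi) : Set (Fin d → ℤ)).ncard := Set.ncard_image_of_injective _ hinj
    _ = (Finset.Icc lo hi).card := Set.ncard_coe_finset _

lemma count_window (l : ℕ) (c : Fin d → ℝ) {W : ℝ} (hW : 0 ≤ W) (Q : Set (Fin d → ℤ))
    (hQ : ∀ q ∈ Q, ∀ i, (2:ℤ) ^ l ∣ q i ∧ c i ≤ (q i : ℝ) ∧ (q i : ℝ) ≤ c i + W) :
    Q.Finite ∧ (Q.ncard : ℝ) ≤ (W / 2 ^ l + 1) ^ d := by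
  have hpos : (0:ℝ) < 2 ^ l := by positivity
  set lo : Fin d → ℤ := fun i => ⌈c i / 2 ^ l⌉ with hlo
  set hi : Fin d → ℤ := fun i => ⌊(c i + W) / 2 ^ l⌋ with hhi
  have hcore := count_core l lo hi Q ?_
  · refine ⟨hcore.1, ?_⟩
    have h1 : ((Finset.Icc lo hi).card : ℝ) ≤ (W / 2 ^ l + 1) ^ d := by
      rw [Pi.card_Icc]
      push_cast [Int.card_Icc]
      calc ∏ i, ((hi i + 1 - lo i).toNat : ℝ)
          ≤ ∏ _i : Fin d, (W / 2 ^ l + 1) := by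
            apply Finset.prod_le_prod
            · intro i _; positivity
            · intro i _
              rcases le_or_gt (hi i + 1 - lo i) 0 with h | h
              · rw [Int.toNat_of_nonpos h]
                have : (0:ℝ) ≤ W / 2 ^ l := by positivity
                norm_num; linarith
              · have h5 : ((hi i + 1 - lo i).toNat : ℤ) = hi i + 1 - lo i :=
                  Int.toNat_of_nonneg h.le
                have h6 : (((hi i + 1 - lo i).toNat : ℕ) : ℝ) = (hi i : ℝ) + 1 - (lo i : ℝ) := by
                  exact_mod_cast congrArg (fun z : ℤ => (z : ℝ)) h5
                rw [h6]
                have hl : c i / 2 ^ l ≤ (lo i : ℝ) := Int.le_ceil _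
                have hh : ((hi i : ℝ)) ≤ (c i + W) / 2 ^ l := Int.floor_le _
                push_cast
                have hsplit : (c i + W) / 2 ^ l = c i / 2 ^ l + W / 2 ^ l := by ring
                linarith
        _ = (W / 2 ^ l + 1) ^ d := by
            rw [Finset.prod_const, Finset.card_univ, Fintype.card_fin]
    calc (Q.ncard : ℝ) ≤ ((Finset.Icc lo hi).card : ℝ) := by exact_mod_cast hcore.2
      _ ≤ _ := h1
  · intro q hq i
    obtain ⟨hdvd, h1, h2⟩ := hQ q hq i
    obtain ⟨m, hm⟩ := hdvd
    have hqr : (q i : ℝ) = 2 ^ l * m := by rw [hm]; push_cast; ring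
    refine ⟨m, hm, ?_, ?_⟩
    · rw [hlo]
      refine Int.ceil_le.mpr ?_
      rw [div_le_iff₀ hpos]
      nlinarith
    · rw [hhi]
      refine Int.le_floor.mpr ?_
      rw [le_div_iff₀ hpos]
      nlinarith


end Aux

namespace Aux

lemma objLevel_spec {d N : ℕ} (hN : 2 ≤ N) [Nonempty (Fin d)] {O : Set (Fin d → ℝ)}
    (hsub : O ⊆ Box d N) (hne : ∃ q : Fin d → ℤ, toRealPt q ∈ O) :
    (∃ q : Fin d → ℤ, toRealPt q ∈ O ∧ level q = objLevel O) ∧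
      ∀ q : Fin d → ℤ, toRealPt q ∈ O → level q ≤ objLevel O := by
  have hbdd : BddAbove {l | ∃ q : Fin d → ℤ, toRealPt q ∈ O ∧ level q = l} := by
    refine ⟨Nat.log 2 N, ?_⟩
    rintro l ⟨q, hq, rfl⟩
    have hb := hsub hq
    refine level_le_log hN fun i => ?_
    have h1 : (0:ℝ) < (q i : ℝ) := (hb i).1
    have h2 : ((q i : ℝ)) < (N : ℝ) := (hb i).2
    exact ⟨by exact_mod_cast h1, by exact_mod_cast h2⟩
  have hnem : {l | ∃ q : Fin d → ℤ, toRealPt q ∈ O ∧ level q = l}.Nonempty :=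
    let ⟨q, hq⟩ := hne; ⟨level q, q, hq, rfl⟩
  exact ⟨Nat.sSup_mem hnem hbdd, fun q hq => le_csSup hbdd ⟨q, hq, rfl⟩⟩

lemma algoH_mono {d : ℕ} {O : ℕ → Set (Fin d → ℝ)} {m n : ℕ} (h : m ≤ n) :
    algoH O m ⊆ algoH O n := by
  induction n with
  | zero => have : m = 0 := by omega
            subst this; exact subset_rfl
  | succ n ih =>
    by_cases h' : m = n + 1
    · subst h'; exact subset_rfl
    · exact (ih (by omega)).trans Set.subset_union_left

end Aux

open Aux in
/-- if the first `s` objects are all unhit at arrival, then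
`s ≤ OPT·⌊log₂ N⌋·(4α+1)^d` and the algorithm uses at most
`(4α+1)^(2d)·⌊log₂ N⌋·OPT` points, for every (finite) hitting set `T`. -/
theorem competitive_ratio (d N s : ℕ) (hN : 2 ≤ N) (α : ℝ) (hα : 1 ≤ α)
    (O : ℕ → Set (Fin d → ℝ))
    (hbox : ∀ n < s, O n ⊆ Box d N) (hfat : ∀ n < s, IsFat α (O n))
    (hint : ∀ n < s, ∃ q : Fin d → ℤ, toRealPt q ∈ O n)
    (hunhit : ∀ n < s, ¬ hits (algoH O n) (O n))
    (T : Set (Fin d → ℤ)) (hTfin : T.Finite)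
    (hThit : ∀ n < s, ∃ q ∈ T, toRealPt q ∈ O n) :
    (s : ℝ) ≤ T.ncard * Nat.log 2 N * (4 * α + 1) ^ d ∧
    ((algoH O s).ncard : ℝ) ≤ (4 * α + 1) ^ (2 * d) * Nat.log 2 N * T.ncard := by
  classical
  have hB0 : (0:ℝ) ≤ 4 * α + 1 := by linarith
  have hBnn : (0:ℝ) ≤ (4 * α + 1) ^ d := pow_nonneg hB0 d
  have hB2nn : (0:ℝ) ≤ (4 * α + 1) ^ (2 * d) := pow_nonneg hB0 (2 * d)
  have hB1 : (1:ℝ) ≤ (4 * α + 1) ^ d := by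
    have := pow_le_pow_left₀ (by norm_num : (0:ℝ) ≤ 1) (by linarith : (1:ℝ) ≤ 4 * α + 1) d
    simpa using this
  have hL1 : 0 < Nat.log 2 N := Nat.log_pos (by norm_num) hN
  rcases Nat.eq_zero_or_pos s with rfl | hs1
  · constructor
    · simp only [Nat.cast_zero]
      have h1 : (0:ℝ) ≤ (T.ncard : ℝ) * (Nat.log 2 N : ℝ) := by positivity
      nlinarith
    · have h0 : algoH O 0 = (∅ : Set (Fin d → ℤ)) := rfl
      rw [h0, Set.ncard_empty]
      have h1 : (0:ℝ) ≤ (Nat.log 2 N : ℝ) * (T.ncard : ℝ) := by positivity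
      push_cast
      nlinarith
  have hTne : T.Nonempty := by obtain ⟨q, hq, -⟩ := hThit 0 hs1; exact ⟨q, hq⟩
  have hT1 : 1 ≤ T.ncard := (Set.ncard_pos hTfin).mpr hTne
  rcases Nat.eq_zero_or_pos d with rfl | hd
  · -- degenerate dimension 0
    haveI hsub0 : Subsingleton (Fin 0 → ℤ) := ⟨fun a b => funext fun i => i.elim0⟩
    obtain ⟨q0, hq0⟩ := hint 0 hs1
    have hs2 : s < 2 := by
      by_contra h
      push_neg at h
      obtain ⟨q1, hq1⟩ := hint 1 (by omega)
      apply hunhit 1 (by omega)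
      refine ⟨q1, ?_, hq1⟩
      have h1 : algoH O 1 = algoH O 0 ∪
          {q | ¬ hits (algoH O 0) (O 0) ∧ q ∈ lvlPts (objLevel (O 0)) (O 0)} := rfl
      rw [h1]
      refine Set.mem_union_right _ ⟨hunhit 0 (by omega), ?_, ?_⟩
      · rw [Subsingleton.elim q1 q0]; exact hq0
      · show level q1 = objLevel (O 0)
        have hset : {l | ∃ q : Fin 0 → ℤ, toRealPt q ∈ O 0 ∧ level q = l} = {level q0} := by
          ext l
          simp only [Set.mem_setOf_eq, Set.mem_singleton_iff]
          constructor
          · rintro ⟨q, -, rfl⟩; rw [Subsingleton.elim q q0]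
          · rintro rfl; exact ⟨q0, hq0, rfl⟩
        rw [objLevel, hset, csSup_singleton, Subsingleton.elim q1 q0]
    have hseq : s = 1 := by omega
    subst hseq
    have hTL : (1:ℝ) ≤ (T.ncard : ℝ) * (Nat.log 2 N : ℝ) := by
      have : 1 ≤ T.ncard * Nat.log 2 N := Nat.one_le_iff_ne_zero.mpr
        (Nat.mul_ne_zero (by omega) (by omega))
      exact_mod_cast this
    constructor
    · simp only [pow_zero, mul_one, Nat.cast_one]
      exact hTL
    · have hsub1 : algoH O 1 ⊆ {q0} := fun x _ => by
        simp only [Set.mem_singleton_iff]; exact Subsingleton.elim x q0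
      have h2 : (algoH O 1).ncard ≤ ({q0} : Set (Fin 0 → ℤ)).ncard :=
        Set.ncard_le_ncard hsub1 (Set.finite_singleton _)
      rw [Set.ncard_singleton] at h2
      have h3 : ((algoH O 1).ncard : ℝ) ≤ 1 := by exact_mod_cast h2
      have h4 : (4 * α + 1) ^ (2 * 0) = (1:ℝ) := by norm_num
      rw [h4]
      nlinarith
  -- main case : d ≥ 1
  haveI : Nonempty (Fin d) := ⟨⟨0, hd⟩⟩
  have hspec : ∀ n, n < s → (∃ q : Fin d → ℤ, toRealPt q ∈ O n ∧ level q = objLevel (O n)) ∧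
      (∀ q : Fin d → ℤ, toRealPt q ∈ O n → level q ≤ objLevel (O n)) := fun n hn =>
    objLevel_spec hN (hbox n hn) (hint n hn)
  set pt : ℕ → (Fin d → ℤ) :=
    fun n => if h : n < s then ((hspec n h).1).choose else fun _ => 0 with hptdef
  have hpt : ∀ n, n < s → toRealPt (pt n) ∈ O n ∧ level (pt n) = objLevel (O n) := by
    intro n hn
    simp only [hptdef, dif_pos hn]
    exact ((hspec n hn).1).choose_spec
  set tq : ℕ → (Fin d → ℤ) :=
    fun n => if h : n < s then (hThit n h).choose else fun _ => 0 with htqdef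
  have htq : ∀ n, n < s → tq n ∈ T ∧ toRealPt (tq n) ∈ O n := by
    intro n hn
    simp only [htqdef, dif_pos hn]
    exact ⟨(hThit n hn).choose_spec.1, (hThit n hn).choose_spec.2⟩
  have hboxpt : ∀ n, n < s → ∀ q : Fin d → ℤ, toRealPt q ∈ O n →
      ∀ i, 0 < q i ∧ q i < (N:ℤ) := by
    intro n hn q hq i
    have h1 : (0:ℝ) < (q i : ℝ) := (hbox n hn hq i).1
    have h2 : ((q i : ℝ)) < (N:ℝ) := (hbox n hn hq i).2
    exact ⟨by exact_mod_cast h1, by exact_mod_cast h2⟩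
  have hlev : ∀ n, n < s → objLevel (O n) ≤ Nat.log 2 N := by
    intro n hn
    rw [← (hpt n hn).2]
    exact level_le_log hN (hboxpt n hn _ (hpt n hn).1)
  have hadd : ∀ n, n < s → pt n ∈ algoH O (n + 1) := by
    intro n hn
    exact Set.mem_union_right _ ⟨hunhit n hn, (hpt n hn).1, (hpt n hn).2⟩
  have hsep : ∀ m n, m < n → n < s → toRealPt (pt m) ∉ O n := by
    intro m n hmn hns hmem
    exact hunhit n hns
      ⟨pt m, algoH_mono (Nat.succ_le_of_lt hmn) (hadd m (lt_trans hmn hns)), hmem⟩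
  have hinj : ∀ m n, m < s → n < s → pt m = pt n → m = n := by
    intro m n hm hn he
    by_contra hne
    rcases Nat.lt_or_ge m n with h | h
    · exact hsep m n h hn (by rw [he]; exact (hpt n hn).1)
    · exact hsep n m (by omega) hm (by rw [← he]; exact (hpt m hm).1)
  -- width bound
  have hwidth : ∀ n, n < s → ∃ (wo : ℝ) (a : Fin d → ℝ),
      O n ⊆ Cube a wo ∧ 0 ≤ wo ∧ wo ≤ α * 2 ^ (objLevel (O n) + 1) := by
    intro n hn
    obtain ⟨wo, wi, ⟨⟨a, hao⟩, -⟩, ⟨⟨b, hbi⟩, -⟩, hfo⟩ := hfat n hn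
    refine ⟨wo, a, hao, ?_, ?_⟩
    · obtain ⟨x0, hx0⟩ := hint n hn
      have := hao hx0 ⟨0, hd⟩
      linarith [this.1, this.2]
    · have hwi : wi ≤ 2 ^ (objLevel (O n) + 1) := by
        by_contra hcon
        push_neg at hcon
        obtain ⟨q, hqc, hqd⟩ := grid_point b (k := objLevel (O n) + 1) (le_of_lt hcon)
        have hqO : toRealPt q ∈ O n := hbi hqc
        have hq0 : ∀ i, q i ≠ 0 := fun i => ne_of_gt (hboxpt n hn q hqO i).1
        have h1 : objLevel (O n) + 1 ≤ level q := le_level hq0 hqd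
        have h2 := (hspec n hn).2 q hqO
        omega
      have : α * wi ≤ α * 2 ^ (objLevel (O n) + 1) :=
        mul_le_mul_of_nonneg_left hwi (by linarith)
      linarith
  have hdiam : ∀ n, n < s → ∀ x y : Fin d → ℝ, x ∈ O n → y ∈ O n →
      ∀ i, |x i - y i| ≤ α * 2 ^ (objLevel (O n) + 1) := by
    intro n hn x y hx hy i
    obtain ⟨wo, a, hao, hwo0, hwob⟩ := hwidth n hn
    have hx' := hao hx i
    have hy' := hao hy i
    have h1 : |x i - y i| ≤ wo := abs_sub_le_iff.mpr ⟨by linarith [hx'.1, hx'.2, hy'.1, hy'.2],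
      by linarith [hx'.1, hx'.2, hy'.1, hy'.2]⟩
    linarith
  -- fiber bound
  have fiber_bound : ∀ (t : Fin d → ℤ) (l : ℕ),
      (((Finset.range s).filter (fun n => tq n = t ∧ objLevel (O n) = l)).card : ℝ) ≤
        (4 * α + 1) ^ d - 1 := by
    intro t l
    set F := (Finset.range s).filter (fun n => tq n = t ∧ objLevel (O n) = l) with hF
    have hα0 : (0:ℝ) < α := by linarith
    set ρ : ℝ := α * 2 ^ (l + 1) with hρ
    have hρ0 : (0:ℝ) < ρ := by positivity
    set w : Fin d → ℤ := fun i => 2 ^ (l + 1) * round ((t i : ℝ) / 2 ^ (l + 1)) with hw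
    set P : Set (Fin d → ℤ) := pt '' {n : ℕ | n < s ∧ tq n = t ∧ objLevel (O n) = l} with hP
    have hwin : ∀ q ∈ insert w P, ∀ i, (2:ℤ) ^ l ∣ q i ∧
        ((t i : ℝ) - ρ) ≤ (q i : ℝ) ∧ (q i : ℝ) ≤ ((t i : ℝ) - ρ) + 2 * ρ := by
      rintro q hq i
      rcases Set.mem_insert_iff.mp hq with rfl | ⟨n, ⟨hn, htn, hln⟩, rfl⟩
      · constructor
        · exact ⟨2 * round ((t i : ℝ) / 2 ^ (l + 1)), by rw [hw]; ring⟩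
        · have h2p : (0:ℝ) < 2 ^ (l + 1) := by positivity
          have h1 : |((t i : ℝ) / 2 ^ (l + 1)) - (round ((t i : ℝ) / 2 ^ (l + 1)) : ℝ)| ≤ 1/2 :=
            abs_sub_round _
          have h2 : |(w i : ℝ) - (t i : ℝ)| ≤ 2 ^ l := by
            have he : (w i : ℝ) = 2 ^ (l + 1) * (round ((t i : ℝ) / 2 ^ (l + 1)) : ℝ) := by
              rw [hw]; push_cast; ring
            rw [he]
            have h3 : 2 ^ (l + 1) * (round ((t i : ℝ) / 2 ^ (l + 1)) : ℝ) - (t i : ℝ) =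
                -(2 ^ (l + 1) * (((t i : ℝ) / 2 ^ (l + 1)) - (round ((t i : ℝ) / 2 ^ (l + 1)) : ℝ))) := by
              field_simp
              ring
            rw [h3, abs_neg, abs_mul, abs_of_pos h2p]
            have h4 : (2:ℝ) ^ (l + 1) = 2 * 2 ^ l := by ring
            nlinarith [abs_nonneg (((t i : ℝ) / 2 ^ (l + 1)) - (round ((t i : ℝ) / 2 ^ (l + 1)) : ℝ))]
          have h5 : (2:ℝ) ^ l ≤ ρ := by
            rw [hρ]
            have : (2:ℝ) ^ (l+1) = 2 * 2 ^ l := by ring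
            nlinarith [pow_pos (by norm_num : (0:ℝ) < 2) l]
          rw [abs_le] at h2
          constructor <;> [linarith [h2.1]; linarith [h2.2]]
      · constructor
        · have hd1 : (2:ℤ) ^ level (pt n) ∣ pt n i := pow_level_dvd (pt n) i
          rwa [(hpt n hn).2, hln] at hd1
        · have h1 := hdiam n hn (toRealPt (pt n)) (toRealPt (tq n)) (hpt n hn).1 (htq n hn).2 i
          rw [hln, htn] at h1
          have h1' : |(pt n i : ℝ) - (t i : ℝ)| ≤ ρ := h1
          rw [abs_le] at h1'
          constructor <;> [linarith [h1'.1]; linarith [h1'.2]]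
    obtain ⟨hQfin, hcount⟩ := count_window l (fun i => (t i : ℝ) - ρ)
      (W := 2 * ρ) (by linarith) (insert w P) hwin
    have hval : (2 * ρ / 2 ^ l + 1) = 4 * α + 1 := by
      rw [hρ]
      have h2l : (0:ℝ) < 2 ^ l := by positivity
      field_simp
      ring
    rw [hval] at hcount
    have hwP : w ∉ P := by
      rintro ⟨n, ⟨hn, htn, hln⟩, hwn⟩
      have hq0 : ∀ i, w i ≠ 0 := by
        intro i
        rw [← hwn]
        exact ne_of_gt (hboxpt n hn _ (hpt n hn).1 i).1
      have hdv : ∀ i, (2:ℤ) ^ (l + 1) ∣ w i := fun i =>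
        ⟨round ((t i : ℝ) / 2 ^ (l + 1)), by rw [hw]⟩
      have h1 : l + 1 ≤ level w := le_level hq0 hdv
      have h2 : level w = l := by rw [← hwn, (hpt n hn).2, hln]
      omega
    have hPfin : P.Finite := hQfin.subset (Set.subset_insert _ _)
    have hcard : (insert w P).ncard = P.ncard + 1 := Set.ncard_insert_of_notMem hwP hPfin
    have hFP : F.card ≤ P.ncard := by
      have hinjOn : Set.InjOn pt {n : ℕ | n < s ∧ tq n = t ∧ objLevel (O n) = l} :=
        fun m hm n hn he => hinj m n hm.1 hn.1 he
      have h1 : P.ncard = {n : ℕ | n < s ∧ tq n = t ∧ objLevel (O n) = l}.ncard := by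
        rw [hP]; exact Set.ncard_image_of_injOn hinjOn
      have hFs : {n : ℕ | n < s ∧ tq n = t ∧ objLevel (O n) = l} = ↑F := by
        ext n
        simp only [hF, Finset.coe_filter, Finset.mem_range, Set.mem_setOf_eq]
      rw [h1, hFs, Set.ncard_coe_finset]
    have hc2 : ((insert w P).ncard : ℝ) ≤ (4 * α + 1) ^ d := hcount
    rw [hcard] at hc2
    push_cast at hc2
    have hc3 : (F.card : ℝ) ≤ (P.ncard : ℝ) := by exact_mod_cast hFP
    linarith
  -- splitting the sequence
  set L := Nat.log 2 N with hLdef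
  set SL := (Finset.range s).filter (fun n => objLevel (O n) = L) with hSL
  set SR := (Finset.range s).filter (fun n => ¬ objLevel (O n) = L) with hSR
  have hsplit : s = SL.card + SR.card := by
    rw [hSL, hSR, Finset.card_filter_add_card_filter_not, Finset.card_range]
  have hSL1 : SL.card ≤ 1 := by
    rw [Finset.card_le_one]
    intro m hm n hn
    simp only [hSL, Finset.mem_filter, Finset.mem_range] at hm hn
    have hconst : ∀ k, k < s → objLevel (O k) = L → pt k = fun _ => 2 ^ L := by
      intro k hk hkL
      funext i
      have hdvd : (2:ℤ) ^ L ∣ pt k i := by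
        have h1 := pow_level_dvd (pt k) i
        rwa [(hpt k hk).2, hkL] at h1
      obtain ⟨c, hc⟩ := hdvd
      have hpos := hboxpt k hk _ (hpt k hk).1 i
      have hNlt : (N:ℤ) < 2 ^ (L + 1) := by
        have := Nat.lt_pow_succ_log_self (by norm_num : 1 < 2) N
        exact_mod_cast this
      have h2L : (0:ℤ) < 2 ^ L := by positivity
      have hc0 : 0 < c := by
        by_contra hcn
        push_neg at hcn
        nlinarith [hpos.1, hc]
      have hc2 : c < 2 := by
        nlinarith [hpos.2, hc, hNlt, pow_succ (2:ℤ) L]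
      have hc1 : c = 1 := by omega
      rw [hc, hc1, mul_one]
    exact hinj m n hm.1 hn.1 (by rw [hconst m hm.1 hm.2, hconst n hn.1 hn.2])
  set T' := hTfin.toFinset with hT'
  have hTcard : T'.card = T.ncard := (Set.ncard_eq_toFinset_card T hTfin).symm
  have hSR_sum : SR.card = ∑ b ∈ T' ×ˢ Finset.range L,
      ((SR.filter (fun n => (tq n, objLevel (O n)) = b)).card) := by
    apply Finset.card_eq_sum_card_fiberwise
    intro n hn
    simp only [hSR, Finset.mem_coe, Finset.mem_filter, Finset.mem_range] at hn
    show (tq n, objLevel (O n)) ∈ T' ×ˢ Finset.range L; rw [Finset.mem_product]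
    constructor
    · rw [hT', Set.Finite.mem_toFinset]
      exact (htq n hn.1).1
    · rw [Finset.mem_range]
      have h1 := hlev n hn.1
      have h2 := hn.2
      omega
  have hfib2 : ∀ b ∈ T' ×ˢ Finset.range L,
      ((SR.filter (fun n => (tq n, objLevel (O n)) = b)).card : ℝ) ≤ (4 * α + 1) ^ d - 1 := by
    intro b _
    refine le_trans ?_ (fiber_bound b.1 b.2)
    have hsub : SR.filter (fun n => (tq n, objLevel (O n)) = b) ⊆
        (Finset.range s).filter (fun n => tq n = b.1 ∧ objLevel (O n) = b.2) := by
      intro n hn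
      simp only [hSR, Finset.mem_filter, Finset.mem_range] at hn ⊢
      obtain ⟨⟨h1, h2⟩, h3⟩ := hn
      exact ⟨h1, by rw [← h3], by rw [← h3]⟩
    exact_mod_cast Nat.cast_le.mpr (Finset.card_le_card hsub)
  have hsum : ((SR.card : ℝ)) ≤ ((T.ncard : ℝ) * (L:ℝ)) * ((4 * α + 1) ^ d - 1) := by
    rw [hSR_sum]
    push_cast
    calc ∑ b ∈ T' ×ˢ Finset.range L,
          ((SR.filter (fun n => (tq n, objLevel (O n)) = b)).card : ℝ)
        ≤ ∑ _b ∈ T' ×ˢ Finset.range L, ((4 * α + 1) ^ d - 1) := Finset.sum_le_sum hfib2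
      _ = ((T' ×ˢ Finset.range L).card : ℝ) * ((4 * α + 1) ^ d - 1) := by
          rw [Finset.sum_const, nsmul_eq_mul]
      _ = ((T.ncard : ℝ) * (L:ℝ)) * ((4 * α + 1) ^ d - 1) := by
          rw [Finset.card_product, Finset.card_range, hTcard]
          push_cast
          ring
  have hTL1 : (1:ℝ) ≤ (T.ncard : ℝ) * (L:ℝ) := by
    have h1 : 1 ≤ T.ncard * L := Nat.one_le_iff_ne_zero.mpr
      (Nat.mul_ne_zero (by omega) (by omega))
    exact_mod_cast h1
  have bound1 : (s:ℝ) ≤ (T.ncard : ℝ) * (L:ℝ) * (4 * α + 1) ^ d := by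
    have he : (s:ℝ) = (SL.card : ℝ) + (SR.card : ℝ) := by
      rw [hsplit]; push_cast; ring
    rw [he]
    have h1 : (SL.card : ℝ) ≤ 1 := by exact_mod_cast hSL1
    have h2 : ((T.ncard : ℝ) * (L:ℝ)) * ((4 * α + 1) ^ d - 1) =
        (T.ncard : ℝ) * (L:ℝ) * (4 * α + 1) ^ d - (T.ncard : ℝ) * (L:ℝ) := by ring
    linarith
  -- bound on the number of used points
  have hlvl_card : ∀ n, n < s → (lvlPts (objLevel (O n)) (O n)).Finite ∧
      ((lvlPts (objLevel (O n)) (O n)).ncard : ℝ) ≤ (4 * α + 1) ^ d := by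
    intro n hn
    obtain ⟨wo, a, hao, hwo0, hwob⟩ := hwidth n hn
    have hcw := count_window (objLevel (O n)) a (W := wo) hwo0
      (lvlPts (objLevel (O n)) (O n)) ?_
    · refine ⟨hcw.1, le_trans hcw.2 ?_⟩
      have h2l : (0:ℝ) < 2 ^ objLevel (O n) := by positivity
      have hb : wo / 2 ^ objLevel (O n) + 1 ≤ 4 * α + 1 := by
        have h4 : α * 2 ^ (objLevel (O n) + 1) = 2 * α * 2 ^ objLevel (O n) := by ring
        have h5 : wo / 2 ^ objLevel (O n) ≤ 4 * α := by
          rw [div_le_iff₀ h2l]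
          nlinarith
        linarith
      have h0 : (0:ℝ) ≤ wo / 2 ^ objLevel (O n) + 1 := by positivity
      exact pow_le_pow_left₀ h0 (by linarith) d
    · intro q hq i
      obtain ⟨hqO, hql⟩ := hq
      constructor
      · have h1 := pow_level_dvd q i
        rwa [hql] at h1
      · have h2 := hao hqO i
        exact ⟨h2.1, h2.2⟩
  have hHfin : ∀ n, n ≤ s → (algoH O n).Finite ∧
      ((algoH O n).ncard : ℝ) ≤ (n:ℝ) * (4 * α + 1) ^ d := by
    intro n
    induction n with
    | zero =>
      intro _
      have h0 : algoH O 0 = (∅ : Set (Fin d → ℤ)) := rfl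
      rw [h0]
      simp
    | succ n ih =>
      intro hns
      have hn : n < s := by omega
      obtain ⟨hf, hc⟩ := ih (by omega)
      obtain ⟨hlf, hlc⟩ := hlvl_card n hn
      have hsub : algoH O (n + 1) ⊆ algoH O n ∪ lvlPts (objLevel (O n)) (O n) := by
        intro q hq
        rcases hq with h | h
        · exact Or.inl h
        · exact Or.inr h.2
      have hfin : (algoH O (n + 1)).Finite := (hf.union hlf).subset hsub
      refine ⟨hfin, ?_⟩
      have h1 : (algoH O (n + 1)).ncard ≤
          (algoH O n ∪ lvlPts (objLevel (O n)) (O n)).ncard :=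
        Set.ncard_le_ncard hsub (hf.union hlf)
      have h2 := Set.ncard_union_le (algoH O n) (lvlPts (objLevel (O n)) (O n))
      have h3 : ((algoH O (n + 1)).ncard : ℝ) ≤
          ((algoH O n).ncard : ℝ) + ((lvlPts (objLevel (O n)) (O n)).ncard : ℝ) := by
        exact_mod_cast le_trans h1 h2
      have h4 : ((n:ℝ) + 1) * (4 * α + 1) ^ d = (n:ℝ) * (4 * α + 1) ^ d + (4 * α + 1) ^ d := by
        ring
      push_cast
      linarith
  obtain ⟨hfS, hcS⟩ := hHfin s le_rfl
  refine ⟨bound1, ?_⟩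
  calc ((algoH O s).ncard : ℝ) ≤ (s:ℝ) * (4 * α + 1) ^ d := hcS
    _ ≤ ((T.ncard : ℝ) * (L:ℝ) * (4 * α + 1) ^ d) * (4 * α + 1) ^ d :=
        mul_le_mul_of_nonneg_right bound1 hBnn
    _ = (4 * α + 1) ^ (2 * d) * (L:ℝ) * (T.ncard : ℝ) := by
        rw [two_mul, pow_add]; ring
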